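/- Let g : Ω → ℝ be measurable with g ≤ 0 on a finite measure space (Ω, μ), and let h : Ω → [0, δ₁] be measurable with A := ∫ h dμ > 0 and ∫_Ω g dμ ≥ −c₁. Then ∫_Ω e^{g} h dμ ≥ A·exp(−δ₁ c₁ / A). -/

import Mathlib

open MeasureTheory

/-- The chain of inequalities (3.9): for `g ≤ 0`, `0 ≤ h ≤ δ₁`, `A = ∫ h dμ > 0`
and `∫ g dμ ≥ −c₁`, one has `∫ e^g h dμ ≥ A·exp(−δ₁ c₁ / A)`. -/
theorem jensen_capacity_bound {Ω : Type*} [MeasurableSpace Ω] (μ : Measure Ω)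
    [IsFiniteMeasure μ] (δ₁ c₁ : ℝ) (hδ₁ : 0 < δ₁)
    (g h : Ω → ℝ) (hg : Integrable g μ) (hgle : ∀ x, g x ≤ 0)
    (hh : Measurable h) (hh0 : ∀ x, 0 ≤ h x) (hh1 : ∀ x, h x ≤ δ₁)
    (hA : 0 < ∫ x, h x ∂μ) (hc₁ : -c₁ ≤ ∫ x, g x ∂μ) :
    (∫ x, h x ∂μ) * Real.exp (-(δ₁ * c₁) / ∫ x, h x ∂μ)
      ≤ ∫ x, Real.exp (g x) * h x ∂μ := by
  set A : ℝ := ∫ x, h x ∂μ with hAdef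
  set m : ℝ := -(δ₁ * c₁) / A with hmdef
  have hAne : A ≠ 0 := ne_of_gt hA
  -- integrability facts
  have hhint : Integrable h μ := by
    refine (integrable_const δ₁).mono' hh.aestronglyMeasurable ?_
    filter_upwards with x
    rw [Real.norm_eq_abs, abs_of_nonneg (hh0 x)]
    exact hh1 x
  have hghint : Integrable (fun x => g x * h x) μ := by
    have := hg.bdd_mul hh.aestronglyMeasurable (Filter.Eventually.of_forall (p := fun x => ‖h x‖ ≤ δ₁) (f := ae μ) fun x => by
      rw [Real.norm_eq_abs, abs_of_nonneg (hh0 x)]; exact hh1 x)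
    simpa [mul_comm] using this
  have hexpint : Integrable (fun x => Real.exp (g x) * h x) μ := by
    refine (integrable_const δ₁).mono'
      ((Real.continuous_exp.comp_aestronglyMeasurable hg.aestronglyMeasurable).mul
        hh.aestronglyMeasurable) ?_
    filter_upwards with x
    rw [Real.norm_eq_abs, abs_of_nonneg (mul_nonneg (Real.exp_pos _).le (hh0 x))]
    calc Real.exp (g x) * h x ≤ 1 * δ₁ := by
          apply mul_le_mul _ (hh1 x) (hh0 x) zero_le_one
          simpa using Real.exp_le_one_iff.mpr (hgle x)
      _ = δ₁ := one_mul _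
  -- step 1: ∫ g h ≥ δ₁ * ∫ g ≥ -(δ₁ * c₁)
  have h1 : -(δ₁ * c₁) ≤ ∫ x, g x * h x ∂μ := by
    have hmono : δ₁ * ∫ x, g x ∂μ ≤ ∫ x, g x * h x ∂μ := by
      rw [← integral_const_mul]
      refine integral_mono (hg.const_mul δ₁) hghint fun x => ?_
      nlinarith [mul_nonneg (neg_nonneg.mpr (hgle x)) (sub_nonneg.mpr (hh1 x))]
    calc -(δ₁ * c₁) = δ₁ * (-c₁) := by ring
      _ ≤ δ₁ * ∫ x, g x ∂μ := by
          exact mul_le_mul_of_nonneg_left hc₁ hδ₁.le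
      _ ≤ _ := hmono
  -- step 2: tangent line inequality e^t ≥ e^m (t - m + 1)
  have h2 : ∫ x, Real.exp m * ((g x - m + 1) * h x) ∂μ
      ≤ ∫ x, Real.exp (g x) * h x ∂μ := by
    refine integral_mono ?_ hexpint fun x => ?_
    · apply Integrable.const_mul
      have : (fun x => (g x - m + 1) * h x)
          = fun x => g x * h x + (1 - m) * h x := by
        funext x; ring
      rw [this]
      exact hghint.add (hhint.const_mul _)
    · have ht : (g x - m) + 1 ≤ Real.exp (g x - m) := Real.add_one_le_exp _
      have := mul_le_mul_of_nonneg_right ht (hh0 x)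
      have e : Real.exp m * Real.exp (g x - m) = Real.exp (g x) := by
        rw [← Real.exp_add]; ring_nf
      calc Real.exp m * ((g x - m + 1) * h x)
          ≤ Real.exp m * (Real.exp (g x - m) * h x) := by
            apply mul_le_mul_of_nonneg_left _ (Real.exp_pos m).le
            simpa using this
        _ = Real.exp (g x) * h x := by rw [← mul_assoc, e]
  -- combine
  have h3 : ∫ x, Real.exp m * ((g x - m + 1) * h x) ∂μ
      = Real.exp m * ((∫ x, g x * h x ∂μ) + (1 - m) * A) := by
    rw [integral_const_mul]
    congr 1
    have : (fun x => (g x - m + 1) * h x)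
        = fun x => g x * h x + (1 - m) * h x := by
      funext x; ring
    rw [this, integral_add hghint (hhint.const_mul _), integral_const_mul]
  have hmA : m * A = -(δ₁ * c₁) := by
    rw [hmdef]; field_simp
  have h4 : A * Real.exp m ≤ Real.exp m * ((∫ x, g x * h x ∂μ) + (1 - m) * A) := by
    have : A ≤ (∫ x, g x * h x ∂μ) + (1 - m) * A := by nlinarith
    nlinarith [Real.exp_pos m]
  linarith [h2, h3 ▸ h4]
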